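/- arXiv:1111.5933 — 3 statements merged into one kernel-verified Lean document; each statement's English description precedes it below -/
import Mathlib

section
/- Let μ : ℝ^m → [-∞, ∞) be concave with bounded domain, s₀ = sup μ attained at x₀, and let C > max(diam(dom μ), ε) for some ε > 0. Then for any s < s₀ and any s' with s - ε(s₀ - s)/(C - ε) ≤ s' < s, the level set X_{s'} := {x : μ(x) ≥ s'} is contained in the ε-neighborhood of X_s := {x : μ(x) ≥ s}. -/
/-- For a concave `μ` with bounded domain whose supremum `s₀` is attained at `x₀`,
and `C > max (diam (dom μ)) ε`, for any `s < s₀` and `s'` with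
`s - ε(s₀-s)/(C-ε) ≤ s' < s`, one has `X_{s'} ⊆ B_ε(X_s)`. -/
theorem stmt_2 (m : ℕ) (μ : EuclideanSpace ℝ (Fin m) → EReal)
    (h_lt_top : ∀ x, μ x < ⊤)
    (h_conc : ∀ x y : EuclideanSpace ℝ (Fin m), ∀ t : ℝ, 0 ≤ t → t ≤ 1 →
      ((1 - t : ℝ) : EReal) * μ x + (t : EReal) * μ y ≤ μ ((1 - t) • x + t • y))
    (h_bdd_dom : Bornology.IsBounded {x | ⊥ < μ x})
    (s₀ : ℝ) (x₀ : EuclideanSpace ℝ (Fin m))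
    (h_max : μ x₀ = (s₀ : EReal))
    (h_sup : ∀ x, μ x ≤ (s₀ : EReal))
    (ε C : ℝ) (hε : 0 < ε)
    (hC_diam : Metric.diam {x | ⊥ < μ x} < C) (hC_eps : ε < C) :
    ∀ s : ℝ, s < s₀ → ∀ s' : ℝ, s - ε * (s₀ - s) / (C - ε) ≤ s' → s' < s →
      {x | (s' : EReal) ≤ μ x} ⊆
        {y | ∃ a, (s : EReal) ≤ μ a ∧ ‖y - a‖ < ε} := by
  intro s hs s' hs'l hs'u x hx
  have hCe : (0:ℝ) < C - ε := by linarith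
  have hx_dom : (⊥ : EReal) < μ x := lt_of_lt_of_le (EReal.bot_lt_coe s') hx
  have hx0_dom : (⊥ : EReal) < μ x₀ := by rw [h_max]; exact EReal.bot_lt_coe s₀
  have hD : dist x x₀ < C :=
    lt_of_le_of_lt (Metric.dist_le_diam_of_mem h_bdd_dom hx_dom hx0_dom) hC_diam
  set r : ℝ := (μ x).toReal with hr_def
  have hr : μ x = (r : EReal) := (EReal.coe_toReal (h_lt_top x).ne hx_dom.ne').symm
  have hx' : (s' : EReal) ≤ μ x := hx
  have hs'r : s' ≤ r := by
    rw [hr] at hx'; exact_mod_cast hx'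
  have hrs₀ : r ≤ s₀ := by
    have := h_sup x; rw [hr] at this; exact_mod_cast this
  set t : ℝ := (s - s') / (s₀ - s') with ht_def
  have hden : (0:ℝ) < s₀ - s' := by linarith
  have ht0 : 0 < t := div_pos (by linarith) hden
  have ht1 : t < 1 := (div_lt_one hden).2 (by linarith)
  refine ⟨(1 - t) • x + t • x₀, ?_, ?_⟩
  · have hconc := h_conc x x₀ t ht0.le ht1.le
    rw [hr, h_max] at hconc
    have hreal : s ≤ (1 - t) * r + t * s₀ := by
      have h1 : (1 - t) * s' + t * s₀ ≤ (1 - t) * r + t * s₀ := by nlinarith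
      have h2 : (1 - t) * s' + t * s₀ = s := by
        have : t * (s₀ - s') = s - s' := by
          rw [ht_def]; field_simp
        nlinarith
      linarith
    calc (s : EReal) ≤ (((1 - t) * r + t * s₀ : ℝ) : EReal) := by exact_mod_cast hreal
      _ = ((1 - t : ℝ) : EReal) * (r : EReal) + (t : EReal) * (s₀ : EReal) := by
          push_cast; ring
      _ ≤ μ ((1 - t) • x + t • x₀) := hconc
  · have heq : x - ((1 - t) • x + t • x₀) = t • (x - x₀) := by module
    rw [heq, norm_smul, Real.norm_eq_abs, abs_of_pos ht0]
    have hnorm : ‖x - x₀‖ = dist x x₀ := (dist_eq_norm x x₀).symm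
    rw [hnorm]
    have key : (s - s') * (C - ε) ≤ ε * (s₀ - s) := by
      have : s - s' ≤ ε * (s₀ - s) / (C - ε) := by linarith
      calc (s - s') * (C - ε) ≤ (ε * (s₀ - s) / (C - ε)) * (C - ε) := by nlinarith
        _ = ε * (s₀ - s) := by field_simp
    have hmain : (s - s') * dist x x₀ < ε * (s₀ - s') := by
      have hd0 : 0 ≤ dist x x₀ := dist_nonneg
      nlinarith
    rw [ht_def, div_mul_eq_mul_div, div_lt_iff₀ hden]
    nlinarith
end

section
/- Let μ : ℝ^m → [-∞, ∞) be concave, upper semi-continuous, with values in [0, log d] on its domain, and with compact nonempty domain. Then for every ε > 0 there is a finite decreasing sequence s₀ > s₁ > ⋯ > s_n of real numbers with s_n < 0, s₀ = sup μ, X_{s_k} ⊆ B_ε(X_{s_{k-1}}) for k = 1, …, n, and dom μ = X₀ = X_{s_n}, where X_s := {x : μ(x) ≥ s}. -/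
lemma ereal_le_of_forall_sub {S : ℝ} {a : EReal} (h : ∀ η : ℝ, 0 < η → ((S - η : ℝ) : EReal) ≤ a) :
    (S : EReal) ≤ a := by
  induction a using EReal.rec with
  | bot =>
    exact absurd (le_bot_iff.1 (h 1 one_pos)) (EReal.coe_ne_bot _)
  | coe c =>
    rw [EReal.coe_le_coe_iff]
    by_contra hc
    push_neg at hc
    have := h ((S - c)/2) (by linarith)
    rw [EReal.coe_le_coe_iff] at this
    linarith
  | top => exact le_top

lemma aux_sub {E : Type*} [MetricSpace E] (μ : E → EReal)
    (h_usc : UpperSemicontinuous μ)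
    (h_compact : IsCompact {x | ⊥ < μ x})
    (K : Set E) (hK : IsOpen K) (S : ℝ)
    (hne : ∀ η : ℝ, 0 < η → ∃ x, ((S - η : ℝ) : EReal) ≤ μ x ∧ x ∉ K) :
    ∃ x, (S : EReal) ≤ μ x ∧ x ∉ K := by
  set t : {η : ℝ // 0 < η} → Set E :=
    fun η => {x | ((S - η.1 : ℝ) : EReal) ≤ μ x} \ K with ht
  have hsub : ∀ η, t η ⊆ {x | ⊥ < μ x} := by
    rintro η x ⟨hx, -⟩
    exact lt_of_lt_of_le (EReal.bot_lt_coe _) hx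
  have hclosed : ∀ η, IsClosed (t η) := by
    intro η
    exact (h_usc.isClosed_preimage _).sdiff hK
  have hcomp : ∀ η, IsCompact (t η) :=
    fun η => h_compact.of_isClosed_subset (hclosed η) (hsub η)
  have hdir : Directed (· ⊇ ·) t := by
    rintro a b
    refine ⟨⟨min a.1 b.1, lt_min a.2 b.2⟩, ?_, ?_⟩ <;>
    · rintro x ⟨hx, hxK⟩
      refine ⟨le_trans (EReal.coe_le_coe_iff.2 ?_) hx, hxK⟩
      simp only
      linarith [min_le_left a.1 b.1, min_le_right a.1 b.1]
  have hnonempty : ∀ η, (t η).Nonempty := by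
    rintro ⟨η, hη⟩
    obtain ⟨x, hx1, hx2⟩ := hne η hη
    exact ⟨x, hx1, hx2⟩
  have : Nonempty {η : ℝ // 0 < η} := ⟨⟨1, one_pos⟩⟩
  obtain ⟨x, hx⟩ := IsCompact.nonempty_iInter_of_directed_nonempty_isCompact_isClosed
    t hdir hnonempty hcomp hclosed
  simp only [Set.mem_iInter] at hx
  refine ⟨x, ?_, (hx ⟨1, one_pos⟩).2⟩
  exact ereal_le_of_forall_sub fun η hη => (hx ⟨η, hη⟩).1

/-- For concave, upper semi-continuous `μ` with values in `[0, log d]` on its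
compact nonempty domain, for every `ε > 0` there is a finite strictly decreasing sequence
`s₀ > s₁ > ⋯ > s_n` with `s_n < 0`, `s₀ = sup μ`, `X_{s_k} ⊆ B_ε(X_{s_{k-1}})`, and
`dom μ = X₀ = X_{s_n}`. -/
theorem stmt_3 (m d : ℕ) (hd : 1 ≤ d) (μ : EuclideanSpace ℝ (Fin m) → EReal)
    (h_conc : ∀ x y : EuclideanSpace ℝ (Fin m), ∀ t : ℝ, 0 ≤ t → t ≤ 1 →
      ((1 - t : ℝ) : EReal) * μ x + (t : EReal) * μ y ≤ μ ((1 - t) • x + t • y))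
    (h_usc : UpperSemicontinuous μ)
    (h_range : ∀ x, ⊥ < μ x → (0 : EReal) ≤ μ x ∧ μ x ≤ (Real.log d : EReal))
    (h_lt_top : ∀ x, μ x < ⊤)
    (h_compact : IsCompact {x | ⊥ < μ x})
    (h_ne : {x | ⊥ < μ x}.Nonempty) :
    ∀ ε > (0 : ℝ), ∃ (n : ℕ) (s : ℕ → ℝ),
      (∀ k < n, s (k + 1) < s k) ∧
      s n < 0 ∧
      (s 0 : EReal) = ⨆ x, μ x ∧
      (∀ k, 1 ≤ k → k ≤ n →
        {x | (s k : EReal) ≤ μ x} ⊆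
          {y | ∃ a, (s (k - 1) : EReal) ≤ μ a ∧ ‖y - a‖ < ε}) ∧
      {x | ⊥ < μ x} = {x | (0 : EReal) ≤ μ x} ∧
      {x | ⊥ < μ x} = {x | (s n : EReal) ≤ μ x} := by
  intro ε hε
  -- the supremum is a real number S
  set T := ⨆ x, μ x with hT
  have hT_le : T ≤ (Real.log d : EReal) := by
    refine iSup_le fun x => ?_
    by_cases h : ⊥ < μ x
    · exact (h_range x h).2
    · push_neg at h
      exact le_trans h bot_le
  obtain ⟨x₀, hx₀⟩ := h_ne
  have hT_ge : (0 : EReal) ≤ T := le_trans (h_range x₀ hx₀).1 (le_iSup μ x₀)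
  have hT_bot : T ≠ ⊥ := fun h => by simp [h] at hT_ge
  have hT_top : T ≠ ⊤ := fun h => by
    rw [h] at hT_le; exact absurd hT_le (by simp)
  set S := T.toReal with hSdef
  have hST : (S : EReal) = T := EReal.coe_toReal hT_top hT_bot
  -- a maximizer xs
  obtain ⟨xs, hxs, -⟩ := aux_sub μ h_usc h_compact ∅ isOpen_empty S (by
    intro η hη
    have hlt : ((S - η : ℝ) : EReal) < T := by
      rw [← hST]; exact_mod_cast sub_lt_self S hη
    obtain ⟨x, hx⟩ := lt_iSup_iff.1 hlt
    exact ⟨x, hx.le, Set.notMem_empty x⟩)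
  have hxs_dom : ⊥ < μ xs := lt_of_lt_of_le (EReal.bot_lt_coe S) hxs
  have hμxs : μ xs = (S : EReal) := le_antisymm (hST ▸ le_iSup μ xs) hxs
  have h0S : (0 : ℝ) ≤ S := by
    have := (h_range xs hxs_dom).1
    rw [hμxs] at this
    exact_mod_cast this
  -- Step 1 : the first step of the staircase, via compactness
  set U : Set (EuclideanSpace ℝ (Fin m)) :=
    {y | ∃ a, (S : EReal) ≤ μ a ∧ ‖y - a‖ < ε} with hU
  have hU_open : IsOpen U := by
    have : U = ⋃ a ∈ {a | (S : EReal) ≤ μ a}, Metric.ball a ε := by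
      ext y
      simp [U, Metric.mem_ball, dist_eq_norm]
    rw [this]
    exact isOpen_biUnion fun a _ => Metric.isOpen_ball
  have hstep1 : ∃ η : ℝ, 0 < η ∧ {x | ((S - η : ℝ) : EReal) ≤ μ x} ⊆ U := by
    by_contra hcon
    push_neg at hcon
    obtain ⟨x, hx1, hx2⟩ := aux_sub μ h_usc h_compact U hU_open S (by
      intro η hη
      obtain ⟨x, hx, hxU⟩ := Set.not_subset.1 (hcon η hη)
      exact ⟨x, hx, hxU⟩)
    exact hx2 ⟨x, hx1, by simp [hε]⟩
  obtain ⟨η, hη, hη_step⟩ := hstep1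
  -- diameter bound
  obtain ⟨C, hC⟩ := Metric.isBounded_iff.1 h_compact.isBounded
  set D := max C 0 with hD
  have hD0 : (0 : ℝ) ≤ D := le_max_right C 0
  -- the contraction parameter
  set t := ε / (D + 2 * ε) with htdef
  have hden : 0 < D + 2 * ε := by linarith
  have ht0 : 0 < t := div_pos hε hden
  have ht1 : t < 1 := by
    rw [htdef, div_lt_one hden]; linarith
  have htD : t * D < ε := by
    rw [htdef, div_mul_eq_mul_div, div_lt_iff₀ hden]
    nlinarith
  set c := 1 / (1 - t) with hcdef
  have h1t : 0 < 1 - t := by linarith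
  have hc1 : 1 < c := by
    rw [hcdef]
    rw [lt_div_iff₀ h1t]
    linarith
  have hc0 : 0 < c := lt_trans one_pos hc1
  have hctc : (1 - t) * c = 1 := by
    rw [hcdef]; field_simp [h1t.ne']
  -- choose n
  obtain ⟨N, hN⟩ := pow_unbounded_of_one_lt (S / η) hc1
  have hSN : S < η * c ^ N := by
    rw [div_lt_iff₀ hη] at hN
    nlinarith [pow_pos hc0 N]
  have hrec : ∀ p : ℕ, (1 - t) * (S - η * c ^ (p + 1)) + t * S = S - η * c ^ p := by
    intro p
    have h2 : (1 - t) * c * c ^ p = c ^ p := by rw [hctc]; ring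
    linear_combination (-η) * h2
  have hmono : ∀ p : ℕ, c ^ p < c ^ (p + 1) := by
    intro p
    calc c ^ p = c ^ p * 1 := (mul_one _).symm
      _ < c ^ p * c := mul_lt_mul_of_pos_left hc1 (pow_pos hc0 p)
      _ = c ^ (p + 1) := (pow_succ c p).symm
  refine ⟨N + 1, fun k => if k = 0 then S else S - η * c ^ (k - 1), ?_, ?_, ?_, ?_, ?_, ?_⟩
  · -- strictly decreasing
    intro k hk
    rcases Nat.eq_zero_or_pos k with rfl | hkpos
    · norm_num
      linarith
    · obtain ⟨p, rfl⟩ : ∃ p, k = p + 1 := ⟨k - 1, by omega⟩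
      simp only [if_neg (Nat.succ_ne_zero _), Nat.add_sub_cancel]
      nlinarith [hmono p]
  · -- s n < 0
    simp only [if_neg (Nat.succ_ne_zero N), Nat.add_sub_cancel]
    linarith
  · -- s 0 = sup
    simp only [if_pos rfl]
    exact hST
  · -- staircase inclusions
    intro k hk1 hkn x hx
    obtain ⟨j, rfl⟩ : ∃ j, k = j + 1 := ⟨k - 1, by omega⟩
    simp only [Nat.add_sub_cancel, if_neg (Nat.succ_ne_zero j), Set.mem_setOf_eq] at hx ⊢
    rcases Nat.eq_zero_or_pos j with rfl | hjpos
    · -- k = 1 : the compactness step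
      rw [pow_zero, mul_one] at hx
      obtain ⟨a, ha1, ha2⟩ := hη_step hx
      exact ⟨a, by rwa [if_pos rfl], ha2⟩
    · -- k ≥ 2 : interpolation toward the maximizer
      obtain ⟨p, rfl⟩ : ∃ p, j = p + 1 := ⟨j - 1, by omega⟩
      simp only [if_neg (Nat.succ_ne_zero p), Nat.add_sub_cancel]
      set a := (1 - t) • x + t • xs with ha
      have hx_dom : ⊥ < μ x := lt_of_lt_of_le (EReal.bot_lt_coe _) hx
      have key : (((1 - t) * (S - η * c ^ (p + 1)) + t * S : ℝ) : EReal) ≤ μ a := by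
        refine le_trans ?_ (h_conc x xs t ht0.le ht1.le)
        rw [EReal.coe_add, EReal.coe_mul, EReal.coe_mul, hμxs]
        refine add_le_add ?_ le_rfl
        exact mul_le_mul_of_nonneg_left hx (EReal.coe_nonneg.2 (by linarith))
      rw [hrec p] at key
      refine ⟨a, key, ?_⟩
      have hxa : x - a = t • (x - xs) := by
        rw [ha]
        module
      rw [hxa, norm_smul, Real.norm_eq_abs, abs_of_pos ht0]
      have hdist : ‖x - xs‖ ≤ D := by
        have := hC hx_dom hxs_dom
        rw [dist_eq_norm] at this
        exact le_trans this (le_max_left C 0)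
      calc t * ‖x - xs‖ ≤ t * D := by nlinarith
        _ < ε := htD
  · -- dom = {0 ≤ μ}
    ext x
    simp only [Set.mem_setOf_eq]
    exact ⟨fun h => (h_range x h).1, fun h => lt_of_lt_of_le (by simp) h⟩
  · -- dom = {s n ≤ μ}
    ext x
    simp only [Set.mem_setOf_eq, if_neg (Nat.succ_ne_zero N), Nat.add_sub_cancel]
    constructor
    · intro h
      refine le_trans ?_ (h_range x h).1
      rw [← EReal.coe_zero]
      exact EReal.coe_le_coe_iff.2 (by nlinarith [pow_pos hc0 N])
    · intro h
      exact lt_of_lt_of_le (EReal.bot_lt_coe _) h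
end

section
/- Let A₁, …, A_m be self-adjoint d×d complex matrices and define p : ℝ^m → ℝ by p(α) = log Tr exp(∑_{i=1}^m α_i A_i). Then p is a convex function on ℝ^m. -/
open Matrix

lemma trace_exp_eq {d : ℕ} {N : Matrix (Fin d) (Fin d) ℂ} (hN : N.IsHermitian) :
    (NormedSpace.exp N).trace = ∑ j, Complex.exp (hN.eigenvalues j) := by
  set u : Matrix (Fin d) (Fin d) ℂ := (hN.eigenvectorUnitary : Matrix (Fin d) (Fin d) ℂ) with hu_def
  have hu1 : star u * u = 1 := Matrix.mem_unitaryGroup_iff'.mp hN.eigenvectorUnitary.2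
  have hu2 : u * star u = 1 := Matrix.mem_unitaryGroup_iff.mp hN.eigenvectorUnitary.2
  have hUnit : IsUnit u := ⟨⟨u, star u, hu2, hu1⟩, rfl⟩
  have hUinv : u⁻¹ = star u := Matrix.inv_eq_right_inv hu2
  conv_lhs => rw [hN.spectral_theorem, Unitary.conjStarAlgAut_apply]
  rw [← hu_def]
  rw [show (star u : Matrix (Fin d) (Fin d) ℂ) = u⁻¹ from hUinv.symm,
    Matrix.exp_conj u _ hUnit, Matrix.trace_mul_cycle, hUinv, hu1, one_mul,
    Matrix.exp_diagonal, Matrix.trace_diagonal]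
  simp [Complex.exp_eq_exp_ℂ]

lemma re_conj_mul (z : ℂ) : ((starRingEnd ℂ) z * z).re = Complex.normSq z := by
  simp [Complex.mul_re, Complex.normSq_apply]

lemma peierls {d : ℕ} {N : Matrix (Fin d) (Fin d) ℂ} (hN : N.IsHermitian)
    {Wm : Matrix (Fin d) (Fin d) ℂ} (hWm : Wm ∈ Matrix.unitaryGroup (Fin d) ℂ) :
    ∑ i, Real.exp ((star Wm * N * Wm) i i).re ≤ (NormedSpace.exp N).trace.re := by
  set u : Matrix (Fin d) (Fin d) ℂ := (hN.eigenvectorUnitary : Matrix (Fin d) (Fin d) ℂ) with hu_def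
  set lam : Fin d → ℝ := hN.eigenvalues with hlam_def
  have hu1 : star u * u = 1 := Matrix.mem_unitaryGroup_iff'.mp hN.eigenvectorUnitary.2
  have hu2 : u * star u = 1 := Matrix.mem_unitaryGroup_iff.mp hN.eigenvectorUnitary.2
  have hw1 : star Wm * Wm = 1 := Matrix.mem_unitaryGroup_iff'.mp hWm
  have hw2 : Wm * star Wm = 1 := Matrix.mem_unitaryGroup_iff.mp hWm
  set C : Matrix (Fin d) (Fin d) ℂ := star u * Wm with hC_def
  have hstarC : star C = star Wm * u := by rw [hC_def, StarMul.star_mul, star_star]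
  have hCl : star C * C = 1 := by
    rw [hstarC, hC_def]
    calc (star Wm * u) * (star u * Wm) = star Wm * (u * star u) * Wm := by noncomm_ring
      _ = 1 := by rw [hu2, mul_one, hw1]
  have hCr : C * star C = 1 := by
    rw [hstarC, hC_def]
    calc (star u * Wm) * (star Wm * u) = star u * (Wm * star Wm) * u := by noncomm_ring
      _ = 1 := by rw [hw2, mul_one, hu1]
  set D : Matrix (Fin d) (Fin d) ℂ := Matrix.diagonal (fun j => (lam j : ℂ)) with hD_def
  set w : Fin d → Fin d → ℝ := fun j i => Complex.normSq (C j i) with hw_def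
  have key1 : ∀ i, ((star Wm * N * Wm) i i).re = ∑ j, w j i * lam j := by
    intro i
    have hrw : star Wm * N * Wm = star C * D * C := by
      conv_lhs => rw [hN.spectral_theorem, Unitary.conjStarAlgAut_apply]
      rw [hstarC, hC_def]
      have : Matrix.diagonal ((RCLike.ofReal : ℝ → ℂ) ∘ hN.eigenvalues) = D := rfl
      rw [← hu_def, ← hlam_def, this]
      noncomm_ring
    rw [hrw]
    have h2 : (star C * D * C) i i
        = ∑ j, (lam j : ℂ) * ((starRingEnd ℂ) (C j i) * C j i) := by
      rw [Matrix.mul_apply]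
      refine Finset.sum_congr rfl fun j _ => ?_
      rw [Matrix.mul_apply]
      simp only [hD_def, Matrix.diagonal_apply, mul_ite, mul_zero, ite_mul, zero_mul,
        Finset.sum_ite_eq', Finset.mem_univ, if_true, Matrix.star_apply]
      rw [show star (C j i) = (starRingEnd ℂ) (C j i) from rfl]
      ring
    rw [h2, Complex.re_sum]
    refine Finset.sum_congr rfl fun j _ => ?_
    rw [show ((lam j : ℂ) * ((starRingEnd ℂ) (C j i) * C j i)).re
        = lam j * ((starRingEnd ℂ) (C j i) * C j i).re from by
      simp [Complex.mul_re, Complex.ofReal_re, Complex.ofReal_im]]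
    rw [re_conj_mul]
    exact mul_comm _ _
  have hcol : ∀ i, ∑ j, w j i = 1 := by
    intro i
    have h := congrFun (congrFun hCl i) i
    have h2 : (star C * C) i i = ∑ j, (starRingEnd ℂ) (C j i) * C j i := by
      rw [Matrix.mul_apply]
      exact Finset.sum_congr rfl fun j _ => by
        rw [Matrix.star_apply]; rfl
    rw [h2] at h
    have h3 := congrArg Complex.re h
    rw [Complex.re_sum] at h3
    simp only [re_conj_mul] at h3
    simpa [Matrix.one_apply] using h3
  have hrow : ∀ j, ∑ i, w j i = 1 := by
    intro j
    have h := congrFun (congrFun hCr j) j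
    have h2 : (C * star C) j j = ∑ i, (starRingEnd ℂ) (C j i) * C j i := by
      rw [Matrix.mul_apply]
      refine Finset.sum_congr rfl fun i _ => ?_
      rw [Matrix.star_apply]
      rw [show star (C j i) = (starRingEnd ℂ) (C j i) from rfl]
      ring
    rw [h2] at h
    have h3 := congrArg Complex.re h
    rw [Complex.re_sum] at h3
    simp only [re_conj_mul] at h3
    simpa [Matrix.one_apply] using h3
  have jensen : ∀ i, Real.exp (∑ j, w j i * lam j) ≤ ∑ j, w j i * Real.exp (lam j) := by
    intro i
    have := convexOn_exp.map_sum_le (t := Finset.univ) (w := fun j => w j i) (p := lam)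
      (fun j _ => Complex.normSq_nonneg _) (hcol i) (fun j _ => trivial)
    simpa [smul_eq_mul] using this
  calc ∑ i, Real.exp ((star Wm * N * Wm) i i).re
      ≤ ∑ i, ∑ j, w j i * Real.exp (lam j) := by
        refine Finset.sum_le_sum fun i _ => ?_
        rw [key1 i]; exact jensen i
    _ = ∑ j, (∑ i, w j i) * Real.exp (lam j) := by
        rw [Finset.sum_comm]
        exact Finset.sum_congr rfl fun j _ => (Finset.sum_mul _ _ _).symm
    _ = ∑ j, Real.exp (lam j) := by simp [hrow]
    _ = (NormedSpace.exp N).trace.re := by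
        rw [trace_exp_eq hN, Complex.re_sum]
        exact Finset.sum_congr rfl fun j _ => (Complex.exp_ofReal_re _).symm

/-- For self-adjoint `d×d` complex matrices `A₁, …, A_m`, the free energy
`p(α) = log Tr exp(∑ αᵢ Aᵢ)` is convex on `ℝ^m`. -/
theorem stmt_5 (m d : ℕ) (A : Fin m → Matrix (Fin d) (Fin d) ℂ)
    (hA : ∀ i, (A i).IsHermitian) :
    ConvexOn ℝ Set.univ
      (fun α : Fin m → ℝ =>
        Real.log (NormedSpace.exp (∑ i, (α i : ℂ) • A i)).trace.re) := by
  classical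
  have hHerm : ∀ α : Fin m → ℝ, (∑ i, ((α i : ℂ)) • A i).IsHermitian := by
    intro α
    show (∑ i, ((α i : ℂ)) • A i)ᴴ = _
    rw [Matrix.conjTranspose_sum]
    refine Finset.sum_congr rfl fun i _ => ?_
    rw [Matrix.conjTranspose_smul, (hA i).eq]
    simp [Complex.conj_ofReal]
  refine ⟨convex_univ, ?_⟩
  intro α _ β _ a b ha hb hab
  simp only
  by_cases hd : d = 0
  · subst hd
    have : (Finset.univ : Finset (Fin 0)) = ∅ := rfl
    simp [Matrix.trace, this, Real.log_zero]
  by_cases ha0 : a = 0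
  · have hb1 : b = 1 := by linarith
    subst ha0; subst hb1
    simp
  by_cases hb0 : b = 0
  · have ha1 : a = 1 := by linarith
    subst hb0; subst ha1
    simp
  have ha' : 0 < a := lt_of_le_of_ne ha (Ne.symm ha0)
  have hb' : 0 < b := lt_of_le_of_ne hb (Ne.symm hb0)
  have hd' : 0 < d := Nat.pos_of_ne_zero hd
  haveI : Nonempty (Fin d) := ⟨⟨0, hd'⟩⟩
  set γ : Fin m → ℝ := a • α + b • β with hγ_def
  set Nα : Matrix (Fin d) (Fin d) ℂ := ∑ i, ((α i : ℂ)) • A i with hNα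
  set Nβ : Matrix (Fin d) (Fin d) ℂ := ∑ i, ((β i : ℂ)) • A i with hNβ
  set Nγ : Matrix (Fin d) (Fin d) ℂ := ∑ i, ((γ i : ℂ)) • A i with hNγ
  have hlin : Nγ = (a : ℂ) • Nα + (b : ℂ) • Nβ := by
    rw [hNα, hNβ, hNγ, Finset.smul_sum, Finset.smul_sum, ← Finset.sum_add_distrib]
    refine Finset.sum_congr rfl fun i _ => ?_
    have h1 : ((γ i : ℝ) : ℂ) = (a : ℂ) * (α i : ℂ) + (b : ℂ) * (β i : ℂ) := by
      rw [hγ_def]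
      push_cast [Pi.add_apply, Pi.smul_apply, smul_eq_mul]
      ring
    rw [h1, add_smul, mul_smul, mul_smul]
  have hγHerm := hHerm γ
  set Wm : Matrix (Fin d) (Fin d) ℂ :=
    (hγHerm.eigenvectorUnitary : Matrix (Fin d) (Fin d) ℂ) with hWm_def
  have hWmem : Wm ∈ Matrix.unitaryGroup (Fin d) ℂ := hγHerm.eigenvectorUnitary.2
  have hdiag : star Wm * Nγ * Wm
      = Matrix.diagonal (RCLike.ofReal ∘ hγHerm.eigenvalues) := by
    have hw : star Wm * Wm = 1 := Matrix.mem_unitaryGroup_iff'.mp hWmem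
    rw [hNγ]
    conv_lhs => rw [hγHerm.spectral_theorem, Unitary.conjStarAlgAut_apply]
    rw [← hWm_def]
    simp only [← mul_assoc, hw, one_mul]
    rw [mul_assoc, hw, mul_one]
  set x : Fin d → ℝ := fun i => ((star Wm * Nα * Wm) i i).re with hx_def
  set y : Fin d → ℝ := fun i => ((star Wm * Nβ * Wm) i i).re with hy_def
  have hxy : ∀ i, hγHerm.eigenvalues i = a * x i + b * y i := by
    intro i
    have h1 : (star Wm * Nγ * Wm) i i = (hγHerm.eigenvalues i : ℂ) := by
      rw [hdiag]; simp [Matrix.diagonal_apply]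
    have h2 : star Wm * Nγ * Wm
        = (a : ℂ) • (star Wm * Nα * Wm) + (b : ℂ) • (star Wm * Nβ * Wm) := by
      rw [hlin]
      simp only [Matrix.mul_add, Matrix.add_mul, Matrix.mul_smul, Matrix.smul_mul]
    have h3 := congrArg Complex.re (h1.symm.trans (congrFun (congrFun h2 i) i))
    simpa [hx_def, hy_def, Complex.ofReal_re, Complex.mul_re, Complex.ofReal_im,
      smul_eq_mul] using h3
  have hPα : ∑ i, Real.exp (x i) ≤ (NormedSpace.exp Nα).trace.re :=
    peierls (hHerm α) hWmem
  have hPβ : ∑ i, Real.exp (y i) ≤ (NormedSpace.exp Nβ).trace.re :=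
    peierls (hHerm β) hWmem
  have hγtr : (NormedSpace.exp Nγ).trace.re = ∑ j, Real.exp (a * x j + b * y j) := by
    rw [trace_exp_eq hγHerm, Complex.re_sum]
    exact Finset.sum_congr rfl fun j _ => by rw [Complex.exp_ofReal_re, hxy j]
  set S : ℝ := ∑ j, Real.exp (x j) with hS_def
  set T : ℝ := ∑ j, Real.exp (y j) with hT_def
  have hS : 0 < S := Finset.sum_pos (fun j _ => Real.exp_pos _) Finset.univ_nonempty
  have hT : 0 < T := Finset.sum_pos (fun j _ => Real.exp_pos _) Finset.univ_nonempty
  -- Hölder step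
  have hhold : ∑ j, Real.exp (a * x j + b * y j) ≤ S ^ a * T ^ b := by
    have hST : 0 < S ^ a * T ^ b :=
      mul_pos (Real.rpow_pos_of_pos hS a) (Real.rpow_pos_of_pos hT b)
    rw [← div_le_one hST, Finset.sum_div]
    calc ∑ j, Real.exp (a * x j + b * y j) / (S ^ a * T ^ b)
        = ∑ j, (Real.exp (x j) / S) ^ a * (Real.exp (y j) / T) ^ b := by
          refine Finset.sum_congr rfl fun j _ => ?_
          rw [Real.div_rpow (Real.exp_nonneg _) hS.le,
            Real.div_rpow (Real.exp_nonneg _) hT.le,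
            div_mul_div_comm, Real.exp_add, mul_comm a _, mul_comm b _,
            Real.exp_mul, Real.exp_mul]
      _ ≤ ∑ j, (a * (Real.exp (x j) / S) + b * (Real.exp (y j) / T)) := by
          refine Finset.sum_le_sum fun j _ => ?_
          exact Real.geom_mean_le_arith_mean2_weighted ha hb
            (div_nonneg (Real.exp_nonneg _) hS.le)
            (div_nonneg (Real.exp_nonneg _) hT.le) hab
      _ = a * (S / S) + b * (T / T) := by
          rw [Finset.sum_add_distrib, ← Finset.mul_sum, ← Finset.mul_sum,
            ← Finset.sum_div, ← Finset.sum_div]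
      _ ≤ 1 := by rw [div_self hS.ne', div_self hT.ne']; linarith
  have hfin : Real.log (NormedSpace.exp Nγ).trace.re
      ≤ a * Real.log S + b * Real.log T := by
    rw [hγtr]
    calc Real.log (∑ j, Real.exp (a * x j + b * y j))
        ≤ Real.log (S ^ a * T ^ b) := by
          apply Real.log_le_log
          · exact Finset.sum_pos (fun j _ => Real.exp_pos _) Finset.univ_nonempty
          · exact hhold
      _ = a * Real.log S + b * Real.log T := by
          rw [Real.log_mul (Real.rpow_pos_of_pos hS a).ne' (Real.rpow_pos_of_pos hT b).ne',
            Real.log_rpow hS, Real.log_rpow hT]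
  refine hfin.trans ?_
  have h1 : Real.log S ≤ Real.log (NormedSpace.exp Nα).trace.re := Real.log_le_log hS hPα
  have h2 : Real.log T ≤ Real.log (NormedSpace.exp Nβ).trace.re := Real.log_le_log hT hPβ
  have := add_le_add (mul_le_mul_of_nonneg_left h1 ha) (mul_le_mul_of_nonneg_left h2 hb)
  exact this
end
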